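/- Let k > 0 and α ∈ ℝ² with |n+α| ≠ k for all n ∈ ℤ². For v with Fourier coefficients v_n on the boundary, define ⟨𝒯v, v⟩ := Σ_n (i/β_n)[k²|v_n|² − |α̂_n·v_n|²] where β_n = √(k²−|α_n|²) is real positive for |α_n| < k and i|β_n| for |α_n| > k, α_n = n+α, α̂_n = (α_n,0) ∈ ℝ³, and v_n ∈ ℂ³ with third component zero. Then Im⟨𝒯v,v⟩ = Σ_{|α_n|<k} (1/β_n)[k²|v_n|² − |α̂_n·v_n|²] ≥ 0 and Re⟨𝒯v,v⟩ = Σ_{|α_n|>k} (1/|β_n|)[k²|v_n|² − |α̂_n·v_n|²]. -/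

import Mathlib

open Complex

/-- real and imaginary parts of the electromagnetic Calderon
quadratic form `⟨𝒯v,v⟩ = Σ_n (i/β_n)[k²|v_n|² − |α̂_n·v_n|²]`:
`Im⟨𝒯v,v⟩ = Σ_{|α_n|<k}(1/β_n)[k²|v_n|² − |α̂_n·v_n|²] ≥ 0` and
`Re⟨𝒯v,v⟩ = Σ_{|α_n|>k}(1/|β_n|)[k²|v_n|² − |α̂_n·v_n|²]`. -/
theorem calderon_form_re_im (k : ℝ) (hk : 0 < k) (α : EuclideanSpace ℝ (Fin 2))
    (N2 : ℤ × ℤ → ℝ)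
    (hN2 : ∀ n : ℤ × ℤ, N2 n = ((n.1 : ℝ) + α 0) ^ 2 + ((n.2 : ℝ) + α 1) ^ 2)
    (hne : ∀ n : ℤ × ℤ, N2 n ≠ k ^ 2)
    (v : ℤ × ℤ → Fin 3 → ℂ) (hv3 : ∀ n, v n 2 = 0)
    (β : ℤ × ℤ → ℂ)
    (hβ : ∀ n, β n = if N2 n < k ^ 2 then ((Real.sqrt (k ^ 2 - N2 n) : ℝ) : ℂ)
      else Complex.I * ((Real.sqrt (N2 n - k ^ 2) : ℝ) : ℂ))
    (q : ℤ × ℤ → ℝ)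
    (hq : ∀ n, q n = k ^ 2 * (∑ i : Fin 3, ‖v n i‖ ^ 2)
      - ‖(((n.1 : ℝ) + α 0 : ℝ) : ℂ) * v n 0
          + (((n.2 : ℝ) + α 1 : ℝ) : ℂ) * v n 1‖ ^ 2)
    (T : ℤ × ℤ → ℂ)
    (hT : ∀ n, T n = (Complex.I / β n) * ((q n : ℝ) : ℂ))
    (hTsum : Summable fun n => ‖T n‖)
    (f g : ℤ × ℤ → ℝ)
    (hf : ∀ n, f n = if N2 n < k ^ 2 then (Real.sqrt (k ^ 2 - N2 n))⁻¹ * q n else 0)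
    (hg : ∀ n, g n = if k ^ 2 < N2 n then (Real.sqrt (N2 n - k ^ 2))⁻¹ * q n else 0) :
    (∑' n, T n).im = ∑' n, f n ∧ 0 ≤ ∑' n, f n ∧ (∑' n, T n).re = ∑' n, g n := by
  -- nonnegativity of q when N2 n < k^2
  have hq0 : ∀ n, N2 n < k ^ 2 → 0 ≤ q n := by
    intro n h
    rw [hq, Fin.sum_univ_three, hv3 n]
    set a : ℝ := (n.1 : ℝ) + α 0 with ha
    set b : ℝ := (n.2 : ℝ) + α 1 with hb
    have hab : a ^ 2 + b ^ 2 < k ^ 2 := by rw [hN2] at h; exact h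
    set A := ‖v n 0‖ with hA
    set B := ‖v n 1‖ with hB
    have hA0 : 0 ≤ A := norm_nonneg _
    have hB0 : 0 ≤ B := norm_nonneg _
    have habs : ‖(a : ℂ) * v n 0 + (b : ℂ) * v n 1‖
        ≤ |a| * A + |b| * B := by
      refine le_trans (norm_add_le _ _) ?_
      simp [Complex.norm_real, hA, hB]
    have hsq : ‖(a : ℂ) * v n 0 + (b : ℂ) * v n 1‖ ^ 2
        ≤ (|a| * A + |b| * B) ^ 2 :=
      pow_le_pow_left₀ (norm_nonneg _) habs 2
    have h1 : |a| ^ 2 = a ^ 2 := sq_abs a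
    have h2 : |b| ^ 2 = b ^ 2 := sq_abs b
    have := sq_nonneg (|a| * B - |b| * A)
    simp only [norm_zero]
    nlinarith [sq_nonneg A, sq_nonneg B, abs_nonneg a, abs_nonneg b]
  -- pointwise real/imaginary parts
  have hre : ∀ n, (T n).re = g n := by
    intro n
    rw [hT, hβ, hg]
    by_cases h : N2 n < k ^ 2
    · have hlt : ¬ k ^ 2 < N2 n := by linarith
      have hs : (0:ℝ) < Real.sqrt (k ^ 2 - N2 n) := Real.sqrt_pos.2 (by linarith)
      rw [if_pos h, if_neg hlt]
      have : Complex.I / ((Real.sqrt (k ^ 2 - N2 n) : ℝ) : ℂ) * ((q n : ℝ) : ℂ)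
          = Complex.I * (((q n / Real.sqrt (k ^ 2 - N2 n) : ℝ)) : ℂ) := by
        push_cast
        ring
      rw [this]
      simp
    · have hgt : k ^ 2 < N2 n := lt_of_le_of_ne (not_lt.1 h) (Ne.symm (hne n))
      have hs : (0:ℝ) < Real.sqrt (N2 n - k ^ 2) := Real.sqrt_pos.2 (by linarith)
      have hs' : ((Real.sqrt (N2 n - k ^ 2) : ℝ) : ℂ) ≠ 0 := by
        exact_mod_cast hs.ne'
      rw [if_neg h, if_pos hgt]
      have : Complex.I / (Complex.I * ((Real.sqrt (N2 n - k ^ 2) : ℝ) : ℂ)) * ((q n : ℝ) : ℂ)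
          = ((((Real.sqrt (N2 n - k ^ 2))⁻¹ * q n : ℝ)) : ℂ) := by
        push_cast
        field_simp
      rw [this]
      simp
  have him : ∀ n, (T n).im = f n := by
    intro n
    rw [hT, hβ, hf]
    by_cases h : N2 n < k ^ 2
    · have hs : (0:ℝ) < Real.sqrt (k ^ 2 - N2 n) := Real.sqrt_pos.2 (by linarith)
      rw [if_pos h, if_pos h]
      have : Complex.I / ((Real.sqrt (k ^ 2 - N2 n) : ℝ) : ℂ) * ((q n : ℝ) : ℂ)
          = Complex.I * ((((Real.sqrt (k ^ 2 - N2 n))⁻¹ * q n : ℝ)) : ℂ) := by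
        push_cast
        ring
      rw [this]
      simp
    · have hgt : k ^ 2 < N2 n := lt_of_le_of_ne (not_lt.1 h) (Ne.symm (hne n))
      have hs : (0:ℝ) < Real.sqrt (N2 n - k ^ 2) := Real.sqrt_pos.2 (by linarith)
      rw [if_neg h, if_neg h]
      have hs' : ((Real.sqrt (N2 n - k ^ 2) : ℝ) : ℂ) ≠ 0 := by
        exact_mod_cast hs.ne'
      have : Complex.I / (Complex.I * ((Real.sqrt (N2 n - k ^ 2) : ℝ) : ℂ)) * ((q n : ℝ) : ℂ)
          = ((((Real.sqrt (N2 n - k ^ 2))⁻¹ * q n : ℝ)) : ℂ) := by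
        push_cast
        field_simp
      rw [this]
      simp
  have hf0 : ∀ n, 0 ≤ f n := by
    intro n
    rw [hf]
    by_cases h : N2 n < k ^ 2
    · rw [if_pos h]
      exact mul_nonneg (inv_nonneg.2 (Real.sqrt_nonneg _)) (hq0 n h)
    · rw [if_neg h]
  have hT' : Summable T := hTsum.of_norm
  have hsum := (Complex.hasSum_iff _ _).1 hT'.hasSum
  have heq_im : (∑' n, T n).im = ∑' n, f n := by
    rw [← hsum.2.tsum_eq]
    exact tsum_congr him
  have heq_re : (∑' n, T n).re = ∑' n, g n := by
    rw [← hsum.1.tsum_eq]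
    exact tsum_congr hre
  exact ⟨heq_im, heq_im ▸ (by
    rw [← hsum.2.tsum_eq]
    exact tsum_nonneg (fun n => (him n) ▸ hf0 n)) , heq_re⟩
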